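/- arXiv:2403.07878 — 2 statements merged into one kernel-verified Lean document; each statement's English description precedes it below -/
import Mathlib

section
/- For any even integer s, any integer t, and non-negative integer n: sum_{k=0}^n binom(n,k) * (-1)^k * L_s^(n-k) * F_{s(n+k+4)+t} / ((k+1)(k+2)) = -(L_s^(n+1) * F_{s(n+1)+t} - F_t) / ((n+1)(n+2)) + L_s^(n+1) * F_{s(n+3)+t} / (n+2). -/
open Finset

/-- Lucas numbers on naturals. -/
def lucasNat : ℕ → ℤ
  | 0 => 2
  | 1 => 1
  | n + 2 => lucasNat (n + 1) + lucasNat n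

/-- Fibonacci numbers extended to integer indices: `F_{-m} = (-1)^(m-1) F_m`. -/
def fibZ (n : ℤ) : ℤ :=
  if 0 ≤ n then (Nat.fib n.toNat : ℤ) else (-1) ^ ((-n).toNat + 1) * (Nat.fib (-n).toNat : ℤ)

/-- Lucas numbers extended to integer indices: `L_{-m} = (-1)^m L_m`. -/
def lucasZ (n : ℤ) : ℤ :=
  if 0 ≤ n then lucasNat n.toNat else (-1) ^ (-n).toNat * lucasNat (-n).toNat

lemma fibZ_rec (m : ℤ) : fibZ (m + 2) = fibZ (m + 1) + fibZ m := by
  rcases le_or_gt 0 m with h | h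
  · rw [fibZ, fibZ, fibZ, if_pos (by omega), if_pos (by omega), if_pos h,
      (by omega : (m+2).toNat = m.toNat + 2), (by omega : (m+1).toNat = m.toNat + 1),
      Nat.fib_add_two]
    push_cast; ring
  · rcases (by omega : m = -1 ∨ m = -2 ∨ m ≤ -3) with rfl | rfl | h3
    · norm_num [fibZ]
    · norm_num [fibZ]; decide
    · obtain ⟨b, rfl⟩ : ∃ b : ℕ, m = -(b + 3) := ⟨(-m).toNat - 3, by omega⟩
      rw [fibZ, fibZ, fibZ, if_neg (by omega), if_neg (by omega), if_neg (by omega),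
        (by omega : (-(-((b:ℤ)+3)+2)).toNat = b + 1), (by omega : (-(-((b:ℤ)+3)+1)).toNat = b + 2),
        (by omega : (- -((b:ℤ)+3)).toNat = b + 3), Nat.fib_add_two (n := b + 1)]
      push_cast; ring

lemma lucasZ_rec (m : ℤ) : lucasZ (m + 2) = lucasZ (m + 1) + lucasZ m := by
  rcases le_or_gt 0 m with h | h
  · rw [lucasZ, lucasZ, lucasZ, if_pos (by omega), if_pos (by omega), if_pos h,
      (by omega : (m+2).toNat = m.toNat + 2), (by omega : (m+1).toNat = m.toNat + 1)]
    rw [show lucasNat (m.toNat + 2) = lucasNat (m.toNat + 1) + lucasNat m.toNat from rfl]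
  · rcases (by omega : m = -1 ∨ m = -2 ∨ m ≤ -3) with rfl | rfl | h3
    · norm_num [lucasZ]; decide
    · norm_num [lucasZ]; decide
    · obtain ⟨b, rfl⟩ : ∃ b : ℕ, m = -(b + 3) := ⟨(-m).toNat - 3, by omega⟩
      rw [lucasZ, lucasZ, lucasZ, if_neg (by omega), if_neg (by omega), if_neg (by omega),
        (by omega : (-(-((b:ℤ)+3)+2)).toNat = b + 1), (by omega : (-(-((b:ℤ)+3)+1)).toNat = b + 2),
        (by omega : (- -((b:ℤ)+3)).toNat = b + 3),
        show lucasNat (b + 3) = lucasNat (b + 2) + lucasNat (b + 1) from rfl]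
      ring

lemma fibZ_neg_even (m : ℤ) (hm : Even m) : fibZ (-m) = -fibZ m := by
  have key : ∀ a : ℤ, 0 < a → Even a → fibZ (-a) = -fibZ a := by
    intro a ha he
    rw [fibZ, fibZ, if_neg (by omega), if_pos (by omega), neg_neg]
    have hodd : Odd (a.toNat + 1) := by rcases he with ⟨r, hr⟩; exact ⟨r.toNat, by omega⟩
    rw [hodd.neg_one_pow]; ring
  rcases lt_trichotomy m 0 with h | rfl | h
  · have h2 := key (-m) (by omega) hm.neg
    rw [neg_neg] at h2; linarith
  · norm_num [fibZ]
  · exact key m h hm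

lemma fibZ_neg_odd (m : ℤ) (hm : Odd m) : fibZ (-m) = fibZ m := by
  have key : ∀ a : ℤ, 0 < a → Odd a → fibZ (-a) = fibZ a := by
    intro a ha he
    rw [fibZ, fibZ, if_neg (by omega), if_pos (by omega), neg_neg]
    have hev : Even (a.toNat + 1) := by rcases he with ⟨r, hr⟩; exact ⟨r.toNat + 1, by omega⟩
    rw [hev.neg_one_pow]; ring
  rcases lt_trichotomy m 0 with h | rfl | h
  · have h2 := key (-m) (by omega) hm.neg
    rw [neg_neg] at h2; linarith
  · exact absurd hm (by decide)
  · exact key m h hm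

lemma two_step (P : ℤ → Prop) (h0 : P 0) (h1 : P 1)
    (up : ∀ m : ℤ, P m → P (m + 1) → P (m + 2))
    (down : ∀ m : ℤ, P (m + 1) → P (m + 2) → P m) : ∀ m, P m := by
  have key : ∀ m : ℤ, P m ∧ P (m + 1) := by
    intro m
    induction m using Int.induction_on with
    | zero => exact ⟨h0, h1⟩
    | succ k ih =>
        refine ⟨ih.2, ?_⟩
        rw [show ((k:ℤ)+1)+1 = k+2 by ring]
        exact up k ih.1 ih.2
    | pred k ih =>
        have h := down (-(k:ℤ)-1)
          (by rw [show -(k:ℤ)-1+1 = -(k:ℤ) by ring]; exact ih.1)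
          (by rw [show -(k:ℤ)-1+2 = -(k:ℤ)+1 by ring]; exact ih.2)
        exact ⟨h, by rw [show -(k:ℤ)-1+1 = -(k:ℤ) by ring]; exact ih.1⟩
  exact fun m => (key m).1

lemma fib_lucas (x : ℤ) : fibZ (x + 1) + fibZ (x - 1) = lucasZ x := by
  refine two_step (fun x => fibZ (x + 1) + fibZ (x - 1) = lucasZ x) ?_ ?_ ?_ ?_ x
  · norm_num [fibZ, lucasZ]; decide
  · norm_num [fibZ, lucasZ]; decide
  · intro m hm hm1
    have r1 := fibZ_rec (m + 1)
    have r2 := fibZ_rec (m - 1)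
    have r3 := lucasZ_rec m
    ring_nf at hm hm1 r1 r2 r3 ⊢
    linarith
  · intro m hm1 hm2
    have r1 := fibZ_rec (m + 1)
    have r2 := fibZ_rec (m - 1)
    have r3 := lucasZ_rec m
    ring_nf at hm1 hm2 r1 r2 r3 ⊢
    linarith

lemma shift_id (s : ℤ) (hs : Even s) (m : ℤ) :
    fibZ (m + s) + fibZ (m - s) = lucasZ s * fibZ m := by
  refine two_step (fun m => fibZ (m + s) + fibZ (m - s) = lucasZ s * fibZ m) ?_ ?_ ?_ ?_ m
  · show fibZ (0 + s) + fibZ (0 - s) = lucasZ s * fibZ 0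
    rw [show (0:ℤ) + s = s by ring, show (0:ℤ) - s = -s by ring, fibZ_neg_even s hs]
    norm_num [fibZ]
  · show fibZ (1 + s) + fibZ (1 - s) = lucasZ s * fibZ 1
    rw [show (1:ℤ) - s = -(s - 1) by ring, fibZ_neg_odd (s - 1) (by rcases hs with ⟨r, hr⟩; exact ⟨r - 1, by omega⟩),
      show (1:ℤ) + s = s + 1 by ring, fib_lucas s]
    norm_num [fibZ]
  · intro a h1 h2
    have r1 := fibZ_rec (a + s)
    have r2 := fibZ_rec (a - s)
    have r3 := fibZ_rec a
    ring_nf at h1 h2 r1 r2 r3 ⊢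
    linear_combination h1 + h2 + r1 + r2 - lucasZ s * r3
  · intro a h1 h2
    have r1 := fibZ_rec (a + s)
    have r2 := fibZ_rec (a - s)
    have r3 := fibZ_rec a
    ring_nf at h1 h2 r1 r2 r3 ⊢
    linear_combination h2 - h1 - r1 - r2 + lucasZ s * r3

lemma sumA (L : ℚ) (g : ℤ → ℚ) (hg : ∀ a : ℤ, g (a - 1) = L * g a - g (a + 1)) :
    ∀ (m : ℕ) (a : ℤ),
      ∑ j ∈ range (m + 1), (m.choose j : ℚ) * (-1) ^ j * L ^ (m - j) * g (a + j) = g (a - m) := by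
  intro m
  induction m with
  | zero => intro a; simp
  | succ m ih =>
    intro a
    have key : ∑ j ∈ range (m + 1 + 1), ((m + 1).choose j : ℚ) * (-1) ^ j * L ^ (m + 1 - j) * g (a + j)
        = ∑ j ∈ range (m + 1), (m.choose j : ℚ) * (-1) ^ j * L ^ (m - j) * g ((a - 1) + j) := by
      have hA : ∀ j ∈ range (m + 1),
          (m.choose j : ℚ) * (-1) ^ j * L ^ (m - j) * g ((a - 1) + j)
          = (m.choose j : ℚ) * (-1) ^ j * L ^ (m + 1 - j) * g (a + j)
            - (m.choose j : ℚ) * (-1) ^ j * L ^ (m - j) * g (a + j + 1) := by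
        intro j hj
        simp only [mem_range] at hj
        rw [show (a - 1 : ℤ) + j = (a + j) - 1 by ring, hg (a + j),
          show m + 1 - j = (m - j) + 1 by omega, pow_succ]
        ring
      rw [Finset.sum_congr rfl hA, Finset.sum_sub_distrib]
      rw [Finset.sum_range_succ']
      have hF : ∀ j ∈ range (m + 1),
          ((m + 1).choose (j + 1) : ℚ) * (-1) ^ (j + 1) * L ^ (m + 1 - (j + 1)) * g (a + ↑(j + 1))
          = ((m.choose (j + 1) : ℚ) * (-1) ^ (j + 1) * L ^ (m + 1 - (j + 1)) * g (a + ↑(j + 1)))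
            - (m.choose j : ℚ) * (-1) ^ j * L ^ (m - j) * g (a + j + 1) := by
        intro j hj
        simp only [mem_range] at hj
        rw [Nat.choose_succ_succ]
        push_cast
        simp only [Nat.succ_eq_add_one]
        rw [show a + ((j : ℤ) + 1) = a + j + 1 by ring]
        ring
      rw [Finset.sum_congr rfl hF, Finset.sum_sub_distrib]
      have hB := Finset.sum_range_succ'
        (fun j => ((m).choose j : ℚ) * (-1) ^ j * L ^ (m + 1 - j) * g (a + j)) (m + 1)
      have hB2 : ∑ j ∈ range (m + 1 + 1), ((m).choose j : ℚ) * (-1) ^ j * L ^ (m + 1 - j) * g (a + j)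
          = ∑ j ∈ range (m + 1), ((m).choose j : ℚ) * (-1) ^ j * L ^ (m + 1 - j) * g (a + j) := by
        rw [Finset.sum_range_succ, Nat.choose_succ_self]
        simp
      rw [hB2] at hB
      simp only [Nat.choose_zero_right, pow_zero, Nat.cast_zero, Nat.cast_one, add_zero,
        Nat.sub_zero, one_mul, mul_one, Nat.cast_ofNat] at hB ⊢
      linarith [hB]
    rw [key, ih (a - 1)]
    congr 1
    push_cast
    ring

theorem stmt_18 (s t : ℤ) (hs : Even s) (n : ℕ) :
    ∑ k ∈ range (n + 1),
      (n.choose k : ℚ) * (-1) ^ k * (lucasZ s : ℚ) ^ (n - k) *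
        (fibZ (s * ((n : ℤ) + k + 4) + t) : ℚ) / ((k + 1) * (k + 2)) =
    -(((lucasZ s : ℚ) ^ (n + 1) * (fibZ (s * (n + 1) + t) : ℚ) - fibZ t) / ((n + 1) * (n + 2))) +
    (lucasZ s : ℚ) ^ (n + 1) * (fibZ (s * (n + 3) + t) : ℚ) / (n + 2) := by
  set L : ℚ := (lucasZ s : ℚ) with hL
  set g : ℤ → ℚ := fun m => (fibZ (s * m + t) : ℚ) with hgdef
  have hg : ∀ a : ℤ, g (a - 1) = L * g a - g (a + 1) := by
    intro a
    have h := shift_id s hs (s * a + t)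
    rw [show s * a + t + s = s * (a + 1) + t by ring,
      show s * a + t - s = s * (a - 1) + t by ring] at h
    have hq : (fibZ (s * (a + 1) + t) : ℚ) + (fibZ (s * (a - 1) + t) : ℚ)
        = L * (fibZ (s * a + t) : ℚ) := by rw [hL]; exact_mod_cast h
    simp only [hgdef]
    linarith
  have key := sumA L g hg (n + 2) ((n : ℤ) + 2)
  rw [Finset.sum_range_succ'] at key
  rw [Finset.sum_range_succ'] at key
  have e : ∀ k ∈ range (n + 1),
      ((n + 2).choose (k + 1 + 1) : ℚ) * (-1) ^ (k + 1 + 1) * L ^ (n + 2 - (k + 1 + 1)) *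
        g (↑n + 2 + ↑(k + 1 + 1))
      = ((n + 2).choose (k + 2) : ℚ) * (-1) ^ k * L ^ (n - k) * g ((n : ℤ) + k + 4) := by
    intro k hk
    simp only [mem_range] at hk
    rw [show k + 1 + 1 = k + 2 from rfl, show n + 2 - (k + 2) = n - k by omega,
      show (n : ℤ) + 2 + ((k + 2 : ℕ) : ℤ) = (n : ℤ) + k + 4 by push_cast; ring]
    ring
  rw [Finset.sum_congr rfl e] at key
  rw [show (n : ℤ) + 2 - ((n + 2 : ℕ) : ℤ) = 0 by push_cast; ring] at key
  simp only [Nat.choose_one_right, Nat.choose_zero_right, pow_zero, pow_one, Nat.cast_zero,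
    Nat.cast_one, Nat.cast_add, Nat.cast_ofNat, add_zero, Nat.sub_zero, one_mul, mul_one,
    zero_add] at key
  have hterm : ∀ k ∈ range (n + 1),
      (n.choose k : ℚ) * (-1) ^ k * L ^ (n - k) * (fibZ (s * ((n : ℤ) + k + 4) + t) : ℚ)
          / ((k + 1) * (k + 2))
      = ((n + 2).choose (k + 2) : ℚ) * (-1) ^ k * L ^ (n - k) * g ((n : ℤ) + k + 4)
          / (((n : ℚ) + 1) * ((n : ℚ) + 2)) := by
    intro k hk
    simp only [mem_range] at hk
    have hq1 : ((n : ℚ) + 1) * n.choose k = ((n + 1).choose (k + 1) : ℚ) * (k + 1) := by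
      exact_mod_cast Nat.add_one_mul_choose_eq n k
    have hq2 : ((n : ℚ) + 2) * (n + 1).choose (k + 1) = ((n + 2).choose (k + 2) : ℚ) * (k + 2) := by
      exact_mod_cast Nat.add_one_mul_choose_eq (n + 1) (k + 1)
    have hq3 : (n.choose k : ℚ) * (((n : ℚ) + 1) * ((n : ℚ) + 2))
        = ((n + 2).choose (k + 2) : ℚ) * (((k : ℚ) + 1) * ((k : ℚ) + 2)) := by
      linear_combination ((n : ℚ) + 2) * hq1 + ((k : ℚ) + 1) * hq2
    rw [div_eq_div_iff (by positivity) (by positivity)]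
    simp only [hgdef]
    linear_combination ((-1 : ℚ)) ^ k * L ^ (n - k) * (fibZ (s * ((n : ℤ) + k + 4) + t) : ℚ) * hq3
  rw [Finset.sum_congr rfl hterm, ← Finset.sum_div]
  have hrec : g ((n : ℤ) + 1) = L * g ((n : ℤ) + 2) - g ((n : ℤ) + 3) := by
    have h := hg ((n : ℤ) + 2)
    rw [show (n : ℤ) + 2 - 1 = (n : ℤ) + 1 by ring, show (n : ℤ) + 2 + 1 = (n : ℤ) + 3 by ring] at h
    exact h
  have g1 : (fibZ (s * ((n : ℤ) + 1) + t) : ℚ) = g ((n : ℤ) + 1) := rfl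
  have g3 : (fibZ (s * ((n : ℤ) + 3) + t) : ℚ) = g ((n : ℤ) + 3) := rfl
  have g0 : (fibZ t : ℚ) = g 0 := by
    simp only [hgdef]
    rw [show s * 0 + t = t by ring]
  rw [g1, g3, g0]
  have hn1 : ((n : ℚ) + 1) ≠ 0 := by positivity
  have hn2 : ((n : ℚ) + 2) ≠ 0 := by positivity
  rw [show (n : ℤ) + 2 + 1 = (n : ℤ) + 3 by ring, show n + 2 - 1 = n + 1 from rfl] at key
  have hS : (∑ i ∈ range (n + 1),
        ((n + 2).choose (i + 2) : ℚ) * (-1) ^ i * L ^ (n - i) * g ((n : ℤ) + i + 4))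
      = g 0 + ((n : ℚ) + 2) * L ^ (n + 1) * g ((n : ℤ) + 3) - L ^ (n + 2) * g ((n : ℤ) + 2) := by
    linarith [key]
  rw [hS]
  field_simp
  linear_combination L ^ (n + 1) * hrec
end

section
/- For any non-negative integer n: sum_{k=0}^n binom(n,k) * (-1)^(k+1) * F_{n-2k} / (k+2) = sum_{k=0}^n binom(n,k) * (-1)^k * F_k / ((k+1)(k+2)) = (1 - F_{n+4}) / ((n+1)(n+2)) + 1/(n+1). -/
open Finset

lemma fibZ_ofNat (m : ℕ) : fibZ m = Nat.fib m := by simp [fibZ]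

lemma fibZ_neg_ofNat (m : ℕ) : fibZ (-(m:ℤ)) = (-1)^(m+1) * Nat.fib m := by
  rcases Nat.eq_zero_or_pos m with h | h
  · subst h; simp [fibZ]
  · simp [fibZ, show ¬ (0:ℤ) ≤ -m by omega]

lemma fibZ_add_two (n : ℤ) : fibZ (n + 2) = fibZ (n + 1) + fibZ n := by
  rcases le_or_gt 0 n with h | h
  · lift n to ℕ using h
    rw [show (n:ℤ)+2 = ((n+2:ℕ):ℤ) by push_cast; ring, show (n:ℤ)+1 = ((n+1:ℕ):ℤ) by push_cast; ring,
      fibZ_ofNat, fibZ_ofNat, fibZ_ofNat, Nat.fib_add_two]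
    push_cast; ring
  · obtain ⟨m, rfl⟩ : ∃ m : ℕ, n = -(m+1) := ⟨(-n-1).toNat, by omega⟩
    rcases m with _ | m
    · norm_num [fibZ]
    rcases m with _ | m
    · norm_num
      rw [show (-1:ℤ) = -((1:ℕ):ℤ) by norm_num, show (-2:ℤ) = -((2:ℕ):ℤ) by norm_num,
        show (0:ℤ) = ((0:ℕ):ℤ) by norm_num, fibZ_ofNat, fibZ_neg_ofNat, fibZ_neg_ofNat]
      norm_num
    · have e1 : (-((↑(m+1+1):ℤ)+1)+2) = -((m+1:ℕ):ℤ) := by push_cast; ring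
      have e2 : (-((↑(m+1+1):ℤ)+1)+1) = -((m+2:ℕ):ℤ) := by push_cast; ring
      have e3 : (-((↑(m+1+1):ℤ)+1)) = -((m+3:ℕ):ℤ) := by push_cast; ring
      have hf : Nat.fib (m+3) = Nat.fib (m+1) + Nat.fib (m+2) := Nat.fib_add_two
      have hf2 : Nat.fib (m+2) = Nat.fib m + Nat.fib (m+1) := Nat.fib_add_two
      rw [e1, e2, e3, fibZ_neg_ofNat, fibZ_neg_ofNat, fibZ_neg_ofNat, hf, hf2]
      push_cast [pow_succ]
      ring

noncomputable def Fq (c : ℤ) : ℚ := (fibZ c : ℚ)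

lemma Fq_add_two (n : ℤ) : Fq (n + 2) = Fq (n + 1) + Fq n := by
  unfold Fq; rw [fibZ_add_two]; push_cast; ring

lemma K1 : ∀ (m : ℕ) (c : ℤ),
    ∑ j ∈ range (m+1), (-1:ℚ)^j * (m.choose j) * Fq (c - 2*j) = Fq (c - m) := by
  intro m
  induction m with
  | zero => intro c; simp
  | succ m ih =>
    intro c
    rw [Finset.sum_range_succ']
    have h1 : ∀ j ∈ range (m+1),
        (-1:ℚ)^(j+1) * ((m+1).choose (j+1)) * Fq (c - 2*(j+1 : ℕ)) =
        -((-1:ℚ)^j * (m.choose j) * Fq ((c-2) - 2*j))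
          + (-1:ℚ)^(j+1) * (m.choose (j+1)) * Fq (c - 2*((j+1 : ℕ) : ℤ)) := by
      intro j _
      have e : c - 2*(((j:ℕ)+1 : ℕ) : ℤ) = (c-2) - 2*(j:ℤ) := by push_cast; ring
      rw [Nat.choose_succ_succ, e]
      push_cast
      ring
    rw [Finset.sum_congr rfl h1, Finset.sum_add_distrib]
    have h2 : ∑ j ∈ range (m+1), -((-1:ℚ)^j * (m.choose j) * Fq ((c-2) - 2*j))
        = -Fq ((c-2) - m) := by
      rw [Finset.sum_neg_distrib, ih (c-2)]
    have h3 : ∑ j ∈ range (m+1), (-1:ℚ)^(j+1) * (m.choose (j+1)) * Fq (c - 2*((j+1:ℕ):ℤ))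
        = Fq (c - m) - Fq c := by
      have := Finset.sum_range_succ' (fun j => (-1:ℚ)^j * (m.choose j) * Fq (c - 2*(j:ℤ))) (m+1)
      rw [Finset.sum_range_succ] at this
      simp only [Nat.choose_succ_self, Nat.cast_zero, mul_zero, zero_mul, add_zero] at this
      rw [ih c] at this
      simp only [pow_zero, Nat.choose_zero_right, Nat.cast_one, one_mul, mul_one,
        sub_zero] at this
      linarith [this]
    rw [h2, h3]
    have hr := Fq_add_two (c - 2 - m)
    have e1 : c - 2 - (m:ℤ) + 2 = c - m := by ring
    have e2 : c - 2 - (m:ℤ) + 1 = c - ((m+1 : ℕ) : ℤ) := by push_cast; ring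
    rw [e1, e2] at hr
    simp only [pow_zero, Nat.choose_zero_right, Nat.cast_one, one_mul, Nat.cast_zero,
      mul_zero, sub_zero]
    linarith [hr]

lemma neg_one_zpow_mul_self (z : ℤ) : ((-1:ℚ)^z) * ((-1:ℚ)^z) = 1 := by
  rw [← zpow_add₀ (by norm_num : (-1:ℚ) ≠ 0), show z + z = 2*z by ring, zpow_mul]
  norm_num

lemma Fq_neg (c : ℤ) : Fq (-c) = (-1:ℚ)^(c+1) * Fq c := by
  rcases le_or_gt 0 c with h | h
  · lift c to ℕ using h
    rw [show ((c:ℤ)+1) = ((c+1 : ℕ) : ℤ) by push_cast; ring, zpow_natCast]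
    unfold Fq
    rw [fibZ_neg_ofNat, fibZ_ofNat]
    push_cast; ring
  · obtain ⟨k, rfl⟩ : ∃ k : ℕ, c = -(k+1) := ⟨(-c-1).toNat, by omega⟩
    rw [show (-(-((k:ℤ)+1))) = (((k+1:ℕ)):ℤ) by push_cast; ring]
    rw [show (-((k:ℤ)+1)+1) = -(k:ℤ) by ring, zpow_neg, zpow_natCast]
    rw [show (-((k:ℤ)+1)) = -((k+1 : ℕ) : ℤ) by push_cast; ring]
    unfold Fq
    rw [fibZ_neg_ofNat, fibZ_ofNat]
    push_cast
    rw [show k+1+1 = k+2 from rfl, pow_add]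
    rcases Nat.even_or_odd k with he | he
    · rw [he.neg_one_pow]; norm_num
    · rw [he.neg_one_pow]; norm_num

lemma K2 : ∀ (m : ℕ) (c : ℤ),
    ∑ j ∈ range (m+1), (-1:ℚ)^j * (m.choose j) * Fq (c + j) = (-1:ℚ)^(c+1) * Fq (m - c) := by
  intro m
  induction m with
  | zero =>
    intro c
    have e0 : ((0:ℕ):ℤ) - c = -c := by simp
    rw [Finset.sum_range_one, e0, Fq_neg c, ← mul_assoc, neg_one_zpow_mul_self, one_mul]
    simp
  | succ m ih =>
    intro c
    rw [Finset.sum_range_succ']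
    have h1 : ∀ j ∈ range (m+1),
        (-1:ℚ)^(j+1) * ((m+1).choose (j+1)) * Fq (c + (j+1 : ℕ)) =
        -((-1:ℚ)^j * (m.choose j) * Fq ((c+1) + j))
          + (-1:ℚ)^(j+1) * (m.choose (j+1)) * Fq (c + ((j+1 : ℕ) : ℤ)) := by
      intro j _
      have e : c + (((j:ℕ)+1 : ℕ) : ℤ) = (c+1) + (j:ℤ) := by push_cast; ring
      rw [Nat.choose_succ_succ, e]
      push_cast
      ring
    rw [Finset.sum_congr rfl h1, Finset.sum_add_distrib]
    have h2 : ∑ j ∈ range (m+1), -((-1:ℚ)^j * (m.choose j) * Fq ((c+1) + j))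
        = -((-1:ℚ)^(c+2) * Fq (m - c - 1)) := by
      rw [Finset.sum_neg_distrib, ih (c+1)]
      rw [show (c+1+1) = c+2 by ring, show ((m:ℤ) - (c+1)) = (m:ℤ) - c - 1 by ring]
    have h3 : ∑ j ∈ range (m+1), (-1:ℚ)^(j+1) * (m.choose (j+1)) * Fq (c + ((j+1:ℕ):ℤ))
        = (-1:ℚ)^(c+1) * Fq (m - c) - Fq c := by
      have := Finset.sum_range_succ' (fun j => (-1:ℚ)^j * (m.choose j) * Fq (c + (j:ℤ))) (m+1)
      rw [Finset.sum_range_succ] at this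
      simp only [Nat.choose_succ_self, Nat.cast_zero, mul_zero, zero_mul, add_zero] at this
      rw [ih c] at this
      simp only [pow_zero, Nat.choose_zero_right, Nat.cast_one, one_mul, mul_one,
        add_zero] at this
      linarith [this]
    rw [h2, h3]
    have hr := Fq_add_two ((m:ℤ) - c - 1)
    have e1 : (m:ℤ) - c - 1 + 2 = ((m+1 : ℕ) : ℤ) - c := by push_cast; ring
    have e2 : (m:ℤ) - c - 1 + 1 = (m:ℤ) - c := by ring
    rw [e1, e2] at hr
    have hz : (-1:ℚ)^(c+2) = -((-1:ℚ)^(c+1)) := by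
      rw [show c+2 = (c+1)+1 by ring, zpow_add₀ (by norm_num : (-1:ℚ) ≠ 0), zpow_one]
      ring
    simp only [pow_zero, Nat.choose_zero_right, Nat.cast_one, one_mul, Nat.cast_zero,
      add_zero, hz]
    linear_combination (-((-1:ℚ)^(c+1))) * hr

lemma Fq_natCast (m : ℕ) : Fq m = Nat.fib m := by unfold Fq; rw [fibZ_ofNat]; push_cast; ring

lemma Fq_one : Fq 1 = 1 := by rw [show (1:ℤ) = ((1:ℕ):ℤ) by norm_num, Fq_natCast]; norm_num
lemma Fq_two : Fq 2 = 1 := by rw [show (2:ℤ) = ((2:ℕ):ℤ) by norm_num, Fq_natCast]; norm_num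
lemma Fq_neg_one : Fq (-1) = 1 := by
  rw [show (-1:ℤ) = -((1:ℕ):ℤ) by norm_num]; unfold Fq; rw [fibZ_neg_ofNat]; norm_num
lemma Fq_neg_two : Fq (-2) = -1 := by
  rw [show (-2:ℤ) = -((2:ℕ):ℤ) by norm_num]; unfold Fq; rw [fibZ_neg_ofNat]; norm_num

lemma B1 (n : ℕ) :
    ∑ k ∈ range (n+1), (-1:ℚ)^k * ((n+1).choose (k+1)) * Fq ((n:ℤ) - 2*k)
      = Fq ((n:ℤ)+2) - 1 := by
  have hK := K1 (n+1) ((n:ℤ)+2)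
  rw [Finset.sum_range_succ'] at hK
  have hc : ∀ k ∈ range (n+1),
      (-1:ℚ)^k * ((n+1).choose (k+1)) * Fq ((n:ℤ) - 2*k)
      = -((-1:ℚ)^(k+1) * ((n+1).choose (k+1)) * Fq ((n:ℤ)+2 - 2*((k+1:ℕ):ℤ))) := by
    intro k _
    rw [show (n:ℤ)+2 - 2*((k+1:ℕ):ℤ) = (n:ℤ) - 2*(k:ℤ) by push_cast; ring, pow_succ]
    ring
  rw [Finset.sum_congr rfl hc, Finset.sum_neg_distrib]
  have e1 : (n:ℤ) + 2 - ((n+1 : ℕ) : ℤ) = 1 := by push_cast; ring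
  rw [e1, Fq_one] at hK
  simp only [pow_zero, Nat.choose_zero_right, Nat.cast_one, one_mul, Nat.cast_zero,
    mul_zero, sub_zero] at hK
  linarith [hK]

lemma B2 (n : ℕ) :
    ∑ k ∈ range (n+1), (-1:ℚ)^k * ((n+2).choose (k+2)) * Fq ((n:ℤ) - 2*k)
      = 1 - Fq ((n:ℤ)+4) + ((n:ℚ)+2) * Fq ((n:ℤ)+2) := by
  have hK := K1 (n+2) ((n:ℤ)+4)
  rw [Finset.sum_range_succ', Finset.sum_range_succ'] at hK
  have hc : ∀ k ∈ range (n+1),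
      (-1:ℚ)^k * ((n+2).choose (k+2)) * Fq ((n:ℤ) - 2*k)
      = (-1:ℚ)^(k+1+1) * ((n+2).choose (k+1+1)) * Fq ((n:ℤ)+4 - 2*((k+1+1:ℕ):ℤ)) := by
    intro k _
    rw [show (n:ℤ)+4 - 2*((k+1+1:ℕ):ℤ) = (n:ℤ) - 2*(k:ℤ) by push_cast; ring, pow_succ, pow_succ]
    ring
  rw [Finset.sum_congr rfl hc]
  have e1 : (n:ℤ) + 4 - ((n+2 : ℕ) : ℤ) = 2 := by push_cast; ring
  have e2 : (n:ℤ) + 4 - 2*((0+1:ℕ):ℤ) = (n:ℤ)+2 := by push_cast; ring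
  have e3 : (n:ℤ) + 4 - 2*((0:ℕ):ℤ) = (n:ℤ)+4 := by push_cast; ring
  rw [e1, Fq_two, e2, e3] at hK
  simp only [zero_add, pow_zero, pow_one, Nat.choose_zero_right, Nat.choose_one_right, Nat.cast_one,
    one_mul, Nat.cast_zero, mul_zero, sub_zero] at hK
  rw [show ((n+2:ℕ):ℚ) = (n:ℚ)+2 by push_cast; ring] at hK
  linear_combination hK

lemma A2 (n : ℕ) :
    ∑ k ∈ range (n+1), (-1:ℚ)^k * ((n+2).choose (k+2)) * Fq (k:ℤ)
      = (n:ℚ) + 3 - Fq ((n:ℤ)+4) := by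
  have hK := K2 (n+2) (-2)
  rw [Finset.sum_range_succ', Finset.sum_range_succ'] at hK
  have hc : ∀ k ∈ range (n+1),
      (-1:ℚ)^k * ((n+2).choose (k+2)) * Fq (k:ℤ)
      = (-1:ℚ)^(k+1+1) * ((n+2).choose (k+1+1)) * Fq (-2 + ((k+1+1:ℕ):ℤ)) := by
    intro k _
    rw [show (-2:ℤ) + ((k+1+1:ℕ):ℤ) = (k:ℤ) by push_cast; ring, pow_succ, pow_succ]
    ring
  rw [Finset.sum_congr rfl hc]
  have e1 : ((n+2 : ℕ) : ℤ) - (-2) = (n:ℤ)+4 := by push_cast; ring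
  have e2 : (-2:ℤ) + ((0+1:ℕ):ℤ) = -1 := by norm_num
  have e3 : (-2:ℤ) + ((0:ℕ):ℤ) = -2 := by norm_num
  have e4 : (-1:ℚ)^(-2+1 : ℤ) = -1 := by norm_num
  rw [e1, e2, e3, e4, Fq_neg_one, Fq_neg_two] at hK
  simp only [zero_add, pow_zero, pow_one, Nat.choose_zero_right, Nat.choose_one_right, Nat.cast_one,
    one_mul, mul_one] at hK
  rw [show ((n+2:ℕ):ℚ) = (n:ℚ)+2 by push_cast; ring] at hK
  linear_combination hK

theorem stmt_19 (n : ℕ) :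
    (∑ k ∈ range (n + 1),
      (n.choose k : ℚ) * (-1) ^ (k + 1) * (fibZ ((n : ℤ) - 2 * k) : ℚ) / (k + 2) =
      ∑ k ∈ range (n + 1), (n.choose k : ℚ) * (-1) ^ k * Nat.fib k / ((k + 1) * (k + 2))) ∧
    (∑ k ∈ range (n + 1), (n.choose k : ℚ) * (-1) ^ k * Nat.fib k / ((k + 1) * (k + 2)) =
      (1 - Nat.fib (n + 4)) / ((n + 1) * (n + 2)) + 1 / (n + 1)) := by
  have hn1 : ((n:ℚ)+1) ≠ 0 := by positivity
  have hn2 : ((n:ℚ)+2) ≠ 0 := by positivity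
  have hch1 : ∀ k : ℕ, ((n:ℚ)+1) * (n.choose k) = (((n+1).choose (k+1) : ℕ) : ℚ) * ((k:ℚ)+1) := by
    intro k
    have := Nat.add_one_mul_choose_eq n k
    have h := congrArg (fun x : ℕ => (x : ℚ)) this
    push_cast at h
    linarith [h]
  have hch2 : ∀ k : ℕ, ((n:ℚ)+2) * (((n+1).choose (k+1) : ℕ) : ℚ)
      = (((n+2).choose (k+2) : ℕ) : ℚ) * ((k:ℚ)+2) := by
    intro k
    have := Nat.add_one_mul_choose_eq (n+1) (k+1)
    have h := congrArg (fun x : ℕ => (x : ℚ)) this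
    push_cast at h
    linarith [h]
  have key2 : ∑ k ∈ range (n + 1), (n.choose k : ℚ) * (-1) ^ k * Nat.fib k / ((k + 1) * (k + 2))
      = ((n:ℚ) + 3 - Fq ((n:ℤ)+4)) / (((n:ℚ)+1)*((n:ℚ)+2)) := by
    have hterm : ∀ k ∈ range (n+1),
        (n.choose k : ℚ) * (-1) ^ k * Nat.fib k / ((k + 1) * (k + 2))
        = ((-1:ℚ)^k * ((n+2).choose (k+2)) * Fq (k:ℤ)) / (((n:ℚ)+1)*((n:ℚ)+2)) := by
      intro k _
      rw [Fq_natCast k, div_eq_div_iff (by positivity) (by positivity)]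
      linear_combination ((-1:ℚ)^k * (Nat.fib k : ℚ)) *
        ((((n:ℚ)+2)) * hch1 k + (((k:ℚ)+1)) * hch2 k)
    rw [Finset.sum_congr rfl hterm, ← Finset.sum_div, A2 n]
  have key1 : ∑ k ∈ range (n + 1),
      (n.choose k : ℚ) * (-1) ^ (k + 1) * (fibZ ((n : ℤ) - 2 * k) : ℚ) / (k + 2)
      = (-(Fq ((n:ℤ)+2) - 1))/((n:ℚ)+1)
        + (1 - Fq ((n:ℤ)+4) + ((n:ℚ)+2) * Fq ((n:ℤ)+2)) / (((n:ℚ)+1)*((n:ℚ)+2)) := by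
    have hterm : ∀ k ∈ range (n+1),
        (n.choose k : ℚ) * (-1) ^ (k + 1) * (fibZ ((n : ℤ) - 2 * k) : ℚ) / (k + 2)
        = (-((-1:ℚ)^k * ((n+1).choose (k+1)) * Fq ((n:ℤ) - 2*k))) / ((n:ℚ)+1)
          + ((-1:ℚ)^k * ((n+2).choose (k+2)) * Fq ((n:ℤ) - 2*k)) / (((n:ℚ)+1)*((n:ℚ)+2)) := by
      intro k _
      rw [show ((fibZ ((n:ℤ) - 2*k) : ℤ) : ℚ) = Fq ((n:ℤ) - 2*k) from rfl]
      rw [div_add_div _ _ hn1 (mul_ne_zero hn1 hn2),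
        div_eq_div_iff (by positivity) (by positivity)]
      linear_combination (-(-1:ℚ)^k * Fq ((n:ℤ)-2*k) * ((n:ℚ)+1) * ((n:ℚ)+2)) * hch1 k
        + ((-1:ℚ)^k * Fq ((n:ℤ)-2*k) * ((n:ℚ)+1)) * hch2 k
    rw [Finset.sum_congr rfl hterm, Finset.sum_add_distrib, ← Finset.sum_div, ← Finset.sum_div,
      Finset.sum_neg_distrib, B1 n, B2 n]
  constructor
  · rw [key1, key2]
    field_simp
    ring
  · rw [key2, show ((n:ℤ)+4) = ((n+4:ℕ):ℤ) by push_cast; ring, Fq_natCast]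
    field_simp
    ring
end
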